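/- Let f : ℝ → ℝ be a real analytic function that is even, and suppose the graph of f coincides with the zero set of an irreducible polynomial P ∈ ℝ[x, y]. If all Taylor coefficients of f at 0 lie in a subfield K of ℝ, and P is normalized so that some fixed nonzero coefficient equals 1, then all coefficients of P lie in K. -/

import Mathlib

open MvPolynomial

set_option synthInstance.maxHeartbeats 1000000
set_option maxHeartbeats 2000000

section AnalyticTools

lemma itd_const : ∀ (n : ℕ) (c x : ℝ), iteratedDeriv n (fun _ : ℝ => c) x = if n = 0 then c else 0 := by
  intro n
  induction n with
  | zero => intro c x; simp [iteratedDeriv_zero]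
  | succ n ih =>
    intro c x
    rw [iteratedDeriv_succ']
    have : deriv (fun _ : ℝ => c) = fun _ : ℝ => (0:ℝ) := by
      funext y; simp
    rw [this, ih 0 x]
    simp

lemma itd_add {u v : ℝ → ℝ} {n : ℕ} (hu : ContDiff ℝ n u) (hv : ContDiff ℝ n v) (x : ℝ) :
    iteratedDeriv n (fun t => u t + v t) x = iteratedDeriv n u x + iteratedDeriv n v x := by
  have := iteratedDerivWithin_add (𝕜 := ℝ) (s := Set.univ) (x := x) (Set.mem_univ x)
    uniqueDiffOn_univ hu.contDiffWithinAt hv.contDiffWithinAt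
  simpa [iteratedDerivWithin_univ, Pi.add_def] using this

def AN (u : ℝ → ℝ) : Prop := ∀ x : ℝ, AnalyticAt ℝ u x

lemma AN.contDiff {u : ℝ → ℝ} (h : AN u) {n : ℕ} : ContDiff ℝ n u :=
  AnalyticOnNhd.contDiff (fun x _ => h x)

lemma AN.deriv {u : ℝ → ℝ} (h : AN u) : AN (deriv u) := fun x =>
  (AnalyticOnNhd.deriv (fun y (_ : y ∈ Set.univ) => h y)) x (Set.mem_univ x)

lemma AN.mul {u v : ℝ → ℝ} (hu : AN u) (hv : AN v) : AN (fun t => u t * v t) :=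
  fun x => (hu x).mul (hv x)

def Good (K : Subfield ℝ) (u : ℝ → ℝ) : Prop :=
  AN u ∧ ∀ n : ℕ, iteratedDeriv n u 0 ∈ K

lemma Good.deriv {K : Subfield ℝ} {u : ℝ → ℝ} (h : Good K u) : Good K (_root_.deriv u) :=
  ⟨h.1.deriv, fun n => by rw [← iteratedDeriv_succ']; exact h.2 (n+1)⟩

lemma Good.mul {K : Subfield ℝ} : ∀ {u v : ℝ → ℝ}, Good K u → Good K v →
    Good K (fun t => u t * v t) := by
  suffices H : ∀ (n : ℕ) {u v : ℝ → ℝ}, Good K u → Good K v →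
      iteratedDeriv n (fun t => u t * v t) 0 ∈ K by
    intro u v hu hv
    exact ⟨hu.1.mul hv.1, fun n => H n hu hv⟩
  intro n
  induction n with
  | zero => intro u v hu hv; simpa [iteratedDeriv_zero] using K.mul_mem (hu.2 0) (hv.2 0)
  | succ n ih =>
    intro u v hu hv
    rw [iteratedDeriv_succ']
    have hd : _root_.deriv (fun t => u t * v t)
        = fun t => _root_.deriv u t * v t + u t * _root_.deriv v t := by
      funext y
      exact deriv_mul ((hu.1 y).differentiableAt) ((hv.1 y).differentiableAt)
    rw [hd]
    have h1 : ContDiff ℝ n (fun t => _root_.deriv u t * v t) := (hu.1.deriv.mul hv.1).contDiff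
    have h2 : ContDiff ℝ n (fun t => u t * _root_.deriv v t) := (hu.1.mul hv.1.deriv).contDiff
    rw [itd_add h1 h2]
    exact K.add_mem (ih hu.deriv hv) (ih hu hv.deriv)

lemma Good.const {K : Subfield ℝ} {c : ℝ} (hc : c ∈ K) : Good K (fun _ => c) :=
  ⟨fun _ => analyticAt_const, fun n => by rw [itd_const]; split <;> simp [hc, K.zero_mem]⟩

lemma Good.id {K : Subfield ℝ} : Good K (fun t : ℝ => t) := by
  refine ⟨fun x => analyticAt_id, fun n => ?_⟩
  match n with
  | 0 => simpa [iteratedDeriv_zero] using K.zero_mem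
  | (n+1) =>
    rw [iteratedDeriv_succ']
    have : _root_.deriv (fun t : ℝ => t) = fun _ : ℝ => (1:ℝ) := by funext y; simp
    rw [this, itd_const]; split <;> simp [K.one_mem, K.zero_mem]

lemma Good.pow {K : Subfield ℝ} {u : ℝ → ℝ} (hu : Good K u) (b : ℕ) :
    Good K (fun t => u t ^ b) := by
  induction b with
  | zero => simpa using Good.const K.one_mem
  | succ b ih =>
    have := ih.mul hu
    simpa [pow_succ] using this

lemma itd_sum {ι : Type*} (S : Finset ι) (w : ι → ℝ) (h : ι → ℝ → ℝ)
    (hh : ∀ i ∈ S, AN (h i)) (k : ℕ) (x : ℝ) :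
    iteratedDeriv k (fun t => ∑ i ∈ S, w i * h i t) x
      = ∑ i ∈ S, w i * iteratedDeriv k (h i) x := by
  classical
  induction S using Finset.induction with
  | empty => simp [itd_const]
  | @insert a s hnot ih =>
    have hha : AN (h a) := hh a (Finset.mem_insert_self a s)
    have hhs : ∀ i ∈ s, AN (h i) := fun i hi => hh i (Finset.mem_insert_of_mem hi)
    have h1 : ContDiff ℝ k (fun t => w a * h a t) :=
      (AN.mul (fun _ => analyticAt_const) hha).contDiff
    have h2 : ContDiff ℝ k (fun t => ∑ i ∈ s, w i * h i t) := by
      have : AN (fun t => ∑ i ∈ s, w i * h i t) := by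
        intro x
        exact Finset.analyticAt_fun_sum s (fun i hi => analyticAt_const.mul (hhs i hi x))
      exact this.contDiff
    have hfun : (fun t => ∑ i ∈ insert a s, w i * h i t)
        = fun t => w a * h a t + ∑ i ∈ s, w i * h i t := by
      funext t; rw [Finset.sum_insert hnot]
    rw [hfun]
    have := itd_add (u := fun t => w a * h a t) (v := fun t => ∑ i ∈ s, w i * h i t) h1 h2 x
    have hcm : iteratedDeriv k (fun t => w a * h a t) x = w a * iteratedDeriv k (h a) x := by
      have := iteratedDerivWithin_const_mul (𝕜 := ℝ) (s := Set.univ) (x := x)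
        (Set.mem_univ x) uniqueDiffOn_univ (w a) (hha.contDiff (n := k)).contDiffWithinAt
      simpa [iteratedDerivWithin_univ] using this
    rw [this, hcm, ih hhs, Finset.sum_insert hnot]

lemma eq_zero_of_itd_zero {g : ℝ → ℝ} (hg : AN g) (h0 : ∀ k, iteratedDeriv k g 0 = 0) :
    ∀ t, g t = 0 := by
  obtain ⟨p, hp⟩ := hg 0
  obtain ⟨r, hball⟩ := hp
  have hp0 : p = 0 := by
    ext1 n
    rw [← FormalMultilinearSeries.mkPiRing_coeff_eq p n]
    have h1 : n.factorial • p n (fun _ => (1:ℝ)) = iteratedFDeriv ℝ n g 0 (fun _ => (1:ℝ)) :=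
      hball.factorial_smul (1:ℝ) n
    have h2 : iteratedFDeriv ℝ n g 0 (fun _ => (1:ℝ)) = iteratedDeriv n g 0 := by
      rw [iteratedDeriv_eq_iteratedFDeriv]
    have hc : p.coeff n = 0 := by
      have := h1.trans (h2.trans (h0 n))
      have hfac : (n.factorial : ℝ) ≠ 0 := Nat.cast_ne_zero.mpr n.factorial_ne_zero
      have : (n.factorial : ℝ) * p.coeff n = 0 := by
        rw [FormalMultilinearSeries.coeff, ← nsmul_eq_mul]
        exact this
      exact (mul_eq_zero.mp this).resolve_left hfac
    rw [hc, ContinuousMultilinearMap.mkPiRing_zero]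
    rfl
  have hev : g =ᶠ[nhds (0:ℝ)] 0 := by
    have : HasFPowerSeriesAt g 0 0 := ⟨r, hp0 ▸ hball⟩
    exact this.eventually_eq_zero
  intro t
  exact AnalyticOnNhd.eqOn_zero_of_preconnected_of_eventuallyEq_zero
    (fun x _ => hg x) isPreconnected_univ (Set.mem_univ 0) hev (Set.mem_univ t)

end AnalyticTools

section AlgebraTools

noncomputable def e2 : MvPolynomial (Fin 2) ℝ ≃ₐ[ℝ] Polynomial (MvPolynomial (Fin 1) ℝ) :=
  (MvPolynomial.renameEquiv ℝ (Equiv.swap 0 1)).trans (MvPolynomial.finSuccEquiv ℝ 1)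

lemma evalKey (A : MvPolynomial (Fin 2) ℝ) (a b : ℝ) :
    Polynomial.eval₂ (MvPolynomial.eval ![a] : MvPolynomial (Fin 1) ℝ →+* ℝ) b (e2 A)
      = MvPolynomial.eval ![a, b] A := by
  rw [Polynomial.eval₂_eq_eval_map]
  have h1 : e2 A = MvPolynomial.finSuccEquiv ℝ 1 (rename (Equiv.swap 0 1) A) := rfl
  rw [h1, ← MvPolynomial.eval_eq_eval_mv_eval' ![a] b]
  rw [show (Fin.cons b ![a] : Fin 2 → ℝ) = ![b, a] from rfl]
  rw [MvPolynomial.eval_rename]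
  have : (![b, a] ∘ ⇑(Equiv.swap 0 1) : Fin 2 → ℝ) = ![a, b] := by
    funext i
    fin_cases i <;> simp [Equiv.swap_apply_def]
  rw [this]

lemma mv1_eq_zero (u : MvPolynomial (Fin 1) ℝ) (h : ∀ t : ℝ, MvPolynomial.eval ![t] u = 0) :
    u = 0 := by
  apply MvPolynomial.funext
  intro x
  have hx : x = ![x 0] := by
    funext i
    fin_cases i
    simp
  rw [hx, h (x 0)]
  simp

lemma dvd_of_vanish (f : ℝ → ℝ) (P Q : MvPolynomial (Fin 2) ℝ) (hirr : Irreducible P)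
    (hP : ∀ t, MvPolynomial.eval ![t, f t] P = 0)
    (hQ : ∀ t, MvPolynomial.eval ![t, f t] Q = 0) : P ∣ Q := by
  classical
  set R1 := MvPolynomial (Fin 1) ℝ
  letI : NormalizationMonoid R1 := UniqueFactorizationMonoid.normalizationMonoid.toNormalizationMonoid
  letI : NormalizedGCDMonoid R1 := UniqueFactorizationMonoid.toNormalizedGCDMonoid R1
  set p : Polynomial R1 := e2 P with hp
  set q : Polynomial R1 := e2 Q with hq
  have hPne : P ≠ 0 := hirr.ne_zero
  have hpirr : Irreducible p :=
    (MulEquiv.irreducible_iff (e2 : MvPolynomial (Fin 2) ℝ ≃* Polynomial R1)).mpr hirr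
  have hφp : ∀ t, Polynomial.eval₂ (MvPolynomial.eval ![t] : R1 →+* ℝ) (f t) p = 0 := by
    intro t; rw [hp, evalKey]; exact hP t
  have hφq : ∀ t, Polynomial.eval₂ (MvPolynomial.eval ![t] : R1 →+* ℝ) (f t) q = 0 := by
    intro t; rw [hq, evalKey]; exact hQ t
  have hdeg : 0 < p.natDegree := by
    rcases Nat.eq_zero_or_pos p.natDegree with h0 | h
    · exfalso
      have hC : p = Polynomial.C (p.coeff 0) := Polynomial.eq_C_of_natDegree_eq_zero h0
      have : ∀ t : ℝ, MvPolynomial.eval ![t] (p.coeff 0) = 0 := by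
        intro t
        have := hφp t
        rw [hC] at this
        simpa using this
      have : p.coeff 0 = 0 := mv1_eq_zero _ this
      have : p = 0 := by rw [hC, this, map_zero]
      exact hpirr.ne_zero this
    · exact h
  have hprim : p.IsPrimitive := by
    intro r hr
    rcases hr with ⟨s, hs⟩
    rcases hpirr.isUnit_or_isUnit hs with h | h
    · exact Polynomial.isUnit_C.mp h
    · exfalso
      have hs0 : s.natDegree = 0 := Polynomial.natDegree_eq_zero_of_isUnit h
      have : p.natDegree ≤ 0 := by
        rw [hs]
        refine le_trans (Polynomial.natDegree_mul_le) ?_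
        simp [hs0]
      omega
  set F := FractionRing R1
  set p' : Polynomial F := Polynomial.map (algebraMap R1 F) p with hp'
  set q' : Polynomial F := Polynomial.map (algebraMap R1 F) q with hq'
  have hpirrF : Irreducible p' :=
    (hprim.irreducible_iff_irreducible_map_fraction_map (K := F)).mp hpirr
  rcases hpirrF.isCoprime_or_dvd q' with hcop | hdvd
  · exfalso
    obtain ⟨a, b, hab⟩ := hcop
    set M := nonZeroDivisors R1
    obtain ⟨ca, hca⟩ := IsLocalization.integerNormalization_map_to_map M a
    obtain ⟨cb, hcb⟩ := IsLocalization.integerNormalization_map_to_map M b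
    set A := IsLocalization.integerNormalization M a with hA
    set B := IsLocalization.integerNormalization M b with hB
    set α := algebraMap R1 F (ca : R1)
    set β := algebraMap R1 F (cb : R1)
    have h1 : Polynomial.C α * a = Polynomial.map (algebraMap R1 F) A := by
      rw [hca, ← algebraMap_smul F (ca : R1) a, Polynomial.smul_eq_C_mul]
    have h2 : Polynomial.C β * b = Polynomial.map (algebraMap R1 F) B := by
      rw [hcb, ← algebraMap_smul F (cb : R1) b, Polynomial.smul_eq_C_mul]
    have hmapinj : Function.Injective (Polynomial.map (algebraMap R1 F)) :=
      Polynomial.map_injective _ (IsFractionRing.injective R1 F)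
    have key : (Polynomial.C (cb : R1) * A * p + Polynomial.C (ca : R1) * B * q : Polynomial R1)
        = Polynomial.C ((ca : R1) * (cb : R1)) := by
      apply hmapinj
      rw [Polynomial.map_add, Polynomial.map_mul, Polynomial.map_mul, Polynomial.map_mul,
        Polynomial.map_mul, Polynomial.map_C, Polynomial.map_C]
      rw [← h1, ← h2, ← hp', ← hq', Polynomial.map_C, map_mul, Polynomial.C_mul]
      linear_combination (Polynomial.C α * Polynomial.C β) * hab
    have hzero : ∀ t : ℝ, MvPolynomial.eval ![t] ((ca : R1) * (cb : R1)) = 0 := by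
      intro t
      have := congrArg (Polynomial.eval₂ (MvPolynomial.eval ![t] : R1 →+* ℝ) (f t)) key
      rw [Polynomial.eval₂_add, Polynomial.eval₂_mul, Polynomial.eval₂_mul,
        Polynomial.eval₂_mul, Polynomial.eval₂_mul, Polynomial.eval₂_C, Polynomial.eval₂_C,
        hφp t, hφq t] at this
      simpa using this.symm
    have : (ca : R1) * (cb : R1) = 0 := mv1_eq_zero _ hzero
    have hca0 : (ca : R1) ≠ 0 := nonZeroDivisors.coe_ne_zero ca
    have hcb0 : (cb : R1) ≠ 0 := nonZeroDivisors.coe_ne_zero cb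
    exact (mul_ne_zero hca0 hcb0) this
  · by_cases hQ0 : Q = 0
    · rw [hQ0]; exact dvd_zero P
    have hq0 : q ≠ 0 := fun h => hQ0 (by
      apply e2.injective; rw [← hq, h, map_zero])
    have hdvd2 : p' ∣ Polynomial.map (algebraMap R1 F) q.primPart := by
      have hqfact : q = Polynomial.C q.content * q.primPart := q.eq_C_content_mul_primPart
      have hq'fact : q' = Polynomial.C (algebraMap R1 F q.content)
          * Polynomial.map (algebraMap R1 F) q.primPart := by
        rw [hq']
        conv_lhs => rw [hqfact]
        rw [Polynomial.map_mul, Polynomial.map_C]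
      rw [hq'fact] at hdvd
      have hcu : IsUnit (Polynomial.C (algebraMap R1 F q.content)) := by
        apply Polynomial.isUnit_C.mpr
        apply isUnit_iff_ne_zero.mpr
        intro h
        have : q.content = 0 := IsFractionRing.injective R1 F (by simpa using h)
        exact hq0 (Polynomial.content_eq_zero_iff.mp this)
      exact (hcu.dvd_mul_left).mp hdvd
    have : p ∣ q := (hprim.dvd_of_fraction_map_dvd_fraction_map (K := F)
      hdvd2).trans q.primPart_dvd
    obtain ⟨w, hw⟩ := this
    exact ⟨e2.symm w, by
      apply e2.injective
      rw [map_mul, ← hp, ← hq, AlgEquiv.apply_symm_apply, hw]⟩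

lemma natDegree_e2 (A : MvPolynomial (Fin 2) ℝ) :
    (e2 A).natDegree = MvPolynomial.degreeOf 1 A := by
  have h1 : e2 A = MvPolynomial.finSuccEquiv ℝ 1 (rename (Equiv.swap 0 1) A) := rfl
  rw [h1, MvPolynomial.natDegree_finSuccEquiv]
  have := MvPolynomial.degreeOf_rename_of_injective
    (p := A) (f := ⇑(Equiv.swap (0 : Fin 2) 1)) (Equiv.swap 0 1).injective 1
  simpa [Equiv.swap_apply_right] using this

lemma eq_C_mul_of_dvd (P Q : MvPolynomial (Fin 2) ℝ) (hPne : P ≠ 0) (hQne : Q ≠ 0)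
    (hdvd : P ∣ Q)
    (h0 : MvPolynomial.degreeOf 0 Q ≤ MvPolynomial.degreeOf 0 P)
    (h1 : MvPolynomial.degreeOf 1 Q ≤ MvPolynomial.degreeOf 1 P) :
    ∃ c : ℝ, Q = MvPolynomial.C c * P := by
  classical
  obtain ⟨W, hW⟩ := hdvd
  have hWne : W ≠ 0 := by
    rintro rfl
    rw [mul_zero] at hW
    exact hQne hW
  have hne : ∀ A : MvPolynomial (Fin 2) ℝ, A ≠ 0 → MvPolynomial.finSuccEquiv ℝ 1 A ≠ 0 := by
    intro A hA h
    exact hA ((MvPolynomial.finSuccEquiv ℝ 1).injective (by rw [h, map_zero]))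
  have hne2 : ∀ A : MvPolynomial (Fin 2) ℝ, A ≠ 0 → e2 A ≠ 0 := by
    intro A hA h
    exact hA (e2.injective (by rw [h, map_zero]))
  have e0 : MvPolynomial.degreeOf 0 Q = MvPolynomial.degreeOf 0 P + MvPolynomial.degreeOf 0 W := by
    have : MvPolynomial.finSuccEquiv ℝ 1 Q
        = MvPolynomial.finSuccEquiv ℝ 1 P * MvPolynomial.finSuccEquiv ℝ 1 W := by
      rw [hW, map_mul]
    rw [← MvPolynomial.natDegree_finSuccEquiv, ← MvPolynomial.natDegree_finSuccEquiv,
      ← MvPolynomial.natDegree_finSuccEquiv, this,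
      Polynomial.natDegree_mul (hne P hPne) (hne W hWne)]
  have e1 : MvPolynomial.degreeOf 1 Q = MvPolynomial.degreeOf 1 P + MvPolynomial.degreeOf 1 W := by
    have : e2 Q = e2 P * e2 W := by rw [hW, map_mul]
    rw [← natDegree_e2, ← natDegree_e2, ← natDegree_e2, this,
      Polynomial.natDegree_mul (hne2 P hPne) (hne2 W hWne)]
  have hW0 : MvPolynomial.degreeOf 0 W = 0 := by omega
  have hW1 : MvPolynomial.degreeOf 1 W = 0 := by omega
  have hsupp : ∀ m ∈ W.support, m = 0 := by
    intro m hm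
    ext i
    have : m i ≤ MvPolynomial.degreeOf i W := by
      rw [MvPolynomial.degreeOf_eq_sup]
      exact Finset.le_sup (f := fun m' => m' i) hm
    fin_cases i <;> simp_all <;> omega
  have hWC : W = MvPolynomial.C (MvPolynomial.coeff 0 W) := by
    ext m
    by_cases hm : m = 0
    · subst hm
      simp
    · rw [MvPolynomial.coeff_C, if_neg (fun h => hm h.symm)]
      by_contra hne'
      exact hm (hsupp m (MvPolynomial.mem_support_iff.mpr hne'))
  refine ⟨MvPolynomial.coeff 0 W, ?_⟩
  conv_lhs => rw [hW, hWC]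
  ring

end AlgebraTools

/-- If the graph of an even real-analytic function f coincides with the zero set of an
irreducible polynomial P, all Taylor coefficients of f at 0 lie in a subfield K of ℝ,
and P is normalized so that some fixed nonzero coefficient equals 1, then all
coefficients of P lie in K. -/
theorem algebraic_graph_coefficients_in_subfield
    (f : ℝ → ℝ) (hf : ∀ x, AnalyticAt ℝ f x) (heven : ∀ x, f (-x) = f x)
    (K : Subfield ℝ)
    (hTaylor : ∀ n : ℕ, iteratedDeriv n f 0 / (n.factorial : ℝ) ∈ K)
    (P : MvPolynomial (Fin 2) ℝ) (hirr : Irreducible P)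
    (hgraph : {p : ℝ × ℝ | MvPolynomial.eval ![p.1, p.2] P = 0}
        = {p : ℝ × ℝ | p.2 = f p.1})
    (m₀ : Fin 2 →₀ ℕ) (hnorm : MvPolynomial.coeff m₀ P = 1) :
    ∀ m : Fin 2 →₀ ℕ, MvPolynomial.coeff m P ∈ K := by
  classical
  -- a K-linear projection π : ℝ → K fixing K
  have hker : LinearMap.ker (Algebra.linearMap K ℝ) = ⊥ := by
    rw [LinearMap.ker_eq_bot]
    exact fun a b h => Subtype.ext (by simpa using h)
  obtain ⟨π, hπ⟩ := LinearMap.exists_leftInverse_of_injective (Algebra.linearMap K ℝ) hker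
  set πR : ℝ →ₗ[K] ℝ := (Algebra.linearMap K ℝ).comp π with hπRdef
  have hπRK : ∀ x : ℝ, x ∈ K → πR x = x := by
    intro x hx
    have : π ((⟨x, hx⟩ : K) : ℝ) = ⟨x, hx⟩ := by
      exact congrArg (fun g : K →ₗ[K] K => g ⟨x, hx⟩) hπ
    show (π x : ℝ) = x
    rw [show (x : ℝ) = ((⟨x, hx⟩ : K) : ℝ) from rfl, this]
  have hπRmem : ∀ x : ℝ, πR x ∈ K := fun x => SetLike.coe_mem (π x)
  have hπRmul : ∀ (c r : ℝ), c ∈ K → πR (c * r) = c * πR r := by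
    intro c r hc
    have h1 : c * r = (⟨c, hc⟩ : K) • r := rfl
    have h2 := πR.map_smul (⟨c, hc⟩ : K) r
    rw [h1, h2]
    rfl
  -- the Taylor data of f lies in K
  have hGf : Good K f := by
    refine ⟨hf, fun n => ?_⟩
    have h1 : (n.factorial : ℝ) ∈ K := natCast_mem K _
    have h2 := K.mul_mem (hTaylor n) h1
    rwa [div_mul_cancel₀] at h2
    exact_mod_cast n.factorial_ne_zero
  -- monomial functions
  set hmf : (Fin 2 →₀ ℕ) → ℝ → ℝ := fun μ t => t ^ μ 0 * f t ^ μ 1 with hhmf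
  have hGm : ∀ μ : Fin 2 →₀ ℕ, Good K (hmf μ) := fun μ =>
    ((Good.id (K := K)).pow (μ 0)).mul (hGf.pow (μ 1))
  set d : (Fin 2 →₀ ℕ) → ℕ → ℝ := fun μ k => iteratedDeriv k (hmf μ) 0 with hd
  have hdK : ∀ μ k, d μ k ∈ K := fun μ k => (hGm μ).2 k
  -- P vanishes on the graph
  have hPv : ∀ t, MvPolynomial.eval ![t, f t] P = 0 := by
    intro t
    have ht : ((t, f t) : ℝ × ℝ) ∈ {p : ℝ × ℝ | p.2 = f p.1} := rfl
    rw [← hgraph] at ht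
    exact ht
  -- sum representation of evaluation along the graph
  have hevalsum : ∀ (A : MvPolynomial (Fin 2) ℝ) (t : ℝ), MvPolynomial.eval ![t, f t] A
      = ∑ μ ∈ A.support, MvPolynomial.coeff μ A * hmf μ t := by
    intro A t
    rw [MvPolynomial.eval_eq']
    refine Finset.sum_congr rfl ?_
    intro μ _
    rw [Fin.prod_univ_two]
    simp [hhmf]
  -- linear relations satisfied by the coefficients of P
  have hrel : ∀ k, ∑ μ ∈ P.support, MvPolynomial.coeff μ P * d μ k = 0 := by
    intro k
    have hfun : (fun t => ∑ μ ∈ P.support, MvPolynomial.coeff μ P * hmf μ t)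
        = fun _ : ℝ => (0:ℝ) := by
      funext t
      rw [← hevalsum]
      exact hPv t
    have hsum := itd_sum P.support (fun μ => MvPolynomial.coeff μ P) hmf
      (fun μ _ => (hGm μ).1) k 0
    rw [hfun] at hsum
    rw [itd_const] at hsum
    have : (0:ℝ) = ∑ μ ∈ P.support, MvPolynomial.coeff μ P * d μ k := by
      rw [← hsum]
      split <;> rfl
    exact this.symm
  -- the projected polynomial Q
  set u : (Fin 2 →₀ ℕ) → ℝ := fun μ => πR (MvPolynomial.coeff μ P) with hu
  set Q : MvPolynomial (Fin 2) ℝ := ∑ μ ∈ P.support, MvPolynomial.monomial μ (u μ) with hQdef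
  have hQcoeff : ∀ μ, MvPolynomial.coeff μ Q = if μ ∈ P.support then u μ else 0 := by
    intro μ
    rw [hQdef, MvPolynomial.coeff_sum]
    simp only [MvPolynomial.coeff_monomial]
    exact Finset.sum_ite_eq' P.support μ u
  -- the projected linear relations
  have hrelQ : ∀ k, ∑ μ ∈ P.support, u μ * d μ k = 0 := by
    intro k
    have h1 : πR (∑ μ ∈ P.support, MvPolynomial.coeff μ P * d μ k) = 0 := by
      rw [hrel k, map_zero]
    rw [map_sum] at h1
    rw [← h1]
    refine Finset.sum_congr rfl ?_
    intro μ _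
    rw [mul_comm (MvPolynomial.coeff μ P) (d μ k), hπRmul (d μ k) _ (hdK μ k)]
    ring
  -- Q vanishes on the graph
  have hQv : ∀ t, MvPolynomial.eval ![t, f t] Q = 0 := by
    have hQsum : ∀ t, MvPolynomial.eval ![t, f t] Q = ∑ μ ∈ P.support, u μ * hmf μ t := by
      intro t
      rw [hQdef, map_sum]
      refine Finset.sum_congr rfl ?_
      intro μ _
      rw [MvPolynomial.eval_monomial]
      rw [Finsupp.prod_pow, Fin.prod_univ_two]
      simp [hhmf]
    have hAN : AN (fun t => ∑ μ ∈ P.support, u μ * hmf μ t) := by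
      intro x
      exact Finset.analyticAt_fun_sum _ (fun μ _ => analyticAt_const.mul ((hGm μ).1 x))
    have hzero : ∀ k, iteratedDeriv k (fun t => ∑ μ ∈ P.support, u μ * hmf μ t) 0 = 0 := by
      intro k
      rw [itd_sum P.support u hmf (fun μ _ => (hGm μ).1) k 0]
      exact hrelQ k
    have := eq_zero_of_itd_zero hAN hzero
    intro t
    rw [hQsum t]
    exact this t
  -- divisibility and comparison
  have hdvd : P ∣ Q := dvd_of_vanish f P Q hirr hPv hQv
  have hm₀supp : m₀ ∈ P.support := MvPolynomial.mem_support_iff.mpr (by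
    rw [hnorm]; exact one_ne_zero)
  have hQm₀ : MvPolynomial.coeff m₀ Q = 1 := by
    rw [hQcoeff, if_pos hm₀supp, hu]
    show πR (MvPolynomial.coeff m₀ P) = 1
    rw [hnorm]
    exact hπRK 1 K.one_mem
  have hQne : Q ≠ 0 := by
    intro h
    rw [h] at hQm₀
    simpa using hQm₀
  have hsub : Q.support ⊆ P.support := by
    intro μ hμ
    by_contra hns
    have := hQcoeff μ
    rw [if_neg hns] at this
    exact (MvPolynomial.mem_support_iff.mp hμ) this
  have hdeg : ∀ i : Fin 2, MvPolynomial.degreeOf i Q ≤ MvPolynomial.degreeOf i P := by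
    intro i
    rw [MvPolynomial.degreeOf_eq_sup, MvPolynomial.degreeOf_eq_sup]
    exact Finset.sup_mono hsub
  obtain ⟨c, hc⟩ := eq_C_mul_of_dvd P Q hirr.ne_zero hQne hdvd (hdeg 0) (hdeg 1)
  have hc1 : c = 1 := by
    have := hQm₀
    rw [hc, MvPolynomial.coeff_C_mul, hnorm, mul_one] at this
    exact this
  have hQP : Q = P := by rw [hc, hc1, map_one, one_mul]
  intro m
  have := hQcoeff m
  rw [hQP] at this
  rw [this]
  split
  · exact hπRmem _
  · exact K.zero_mem
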